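/- arXiv:1304.5277 — 2 statements merged into one kernel-verified Lean document; each statement's English description precedes it below -/
import Mathlib

section
/- Let e be a Hermite–Biehler function with s_0 ∈ ℬ(e). For every f ∈ ℬ(e) and every w ∈ ℂ, the entire extension F of z ↦ (s_0(w) f(z) − s_0(z) f(w))/(z − w) belongs to dom(S); that is, F ∈ ℬ(e) and the function z ↦ z·F(z) also belongs to ℬ(e). -/
open Complex MeasureTheory Filter Topology
open scoped ENNReal Classical

noncomputable section

/-- `f^#(z) = conj (f (conj z))`. -/
def sharp (f : ℂ → ℂ) : ℂ → ℂ := fun z => (starRingEnd ℂ) (f ((starRingEnd ℂ) z))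

/-- Hermite–Biehler function: entire, no real zeros, `|e(conj z)| < |e z)|` on the upper
half-plane. -/
def HermiteBiehler (e : ℂ → ℂ) : Prop :=
  Differentiable ℂ e ∧ (∀ x : ℝ, e x ≠ 0) ∧
    ∀ z : ℂ, 0 < z.im → ‖e ((starRingEnd ℂ) z)‖ < ‖e z‖

/-- Hardy space `H²` of the upper half-plane. -/
def HardyH2 (f : ℂ → ℂ) : Prop :=
  DifferentiableOn ℂ f {z : ℂ | 0 < z.im} ∧
    ∃ C : ℝ≥0∞, C ≠ ⊤ ∧ ∀ y : ℝ, 0 < y →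
      eLpNorm (fun x : ℝ => f (x + y * Complex.I)) 2 volume ≤ C

/-- Membership in the de Branges space `ℬ(e)`. -/
def MemDB (e f : ℂ → ℂ) : Prop :=
  Differentiable ℂ f ∧ HardyH2 (fun z => f z / e z) ∧ HardyH2 (fun z => sharp f z / e z)

/-- The associated functions `s_β`. -/
def sFun (e : ℂ → ℂ) (β : ℝ) : ℂ → ℂ := fun z =>
  (Complex.I / 2) * (Complex.exp (Complex.I * β) * e z -
    Complex.exp (-(Complex.I * β)) * sharp e z)

/-- Integrand of the de Branges inner product `⟨g, f⟩`. -/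
def dbItg (e g f : ℂ → ℂ) (x : ℝ) : ℂ :=
  (starRingEnd ℂ) (g x) * f x / ((‖e x‖ : ℂ)) ^ 2

/-- The domain of the canonical selfadjoint extension `S_β`, `β ∈ (0,π)`. -/
def domS (e : ℂ → ℂ) (β : ℝ) : Set (ℂ → ℂ) :=
  {g | Differentiable ℂ g ∧ ∃ f : ℂ → ℂ, MemDB e f ∧ ∃ w : ℂ, ∀ z : ℂ, z ≠ w →
    g z = (sFun e β w * f z - sFun e β z * f w) / (Real.sin β * (z - w))}

/-! ### Auxiliary lemmas -/

lemma differentiable_dslope {h : ℂ → ℂ} {w : ℂ} (hh : Differentiable ℂ h) :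
    Differentiable ℂ (dslope h w) := by
  rw [← differentiableOn_univ] at hh ⊢
  exact (Complex.differentiableOn_dslope Filter.univ_mem).mpr hh

lemma sharp_differentiable {f : ℂ → ℂ} (hf : Differentiable ℂ f) :
    Differentiable ℂ (sharp f) := by
  intro z
  have h := (hf ((starRingEnd ℂ) z)).hasDerivAt
  rw [hasDerivAt_iff_tendsto_slope] at h
  have hconj : Tendsto (starRingEnd ℂ) (𝓝[≠] z) (𝓝[≠] ((starRingEnd ℂ) z)) := by
    refine tendsto_nhdsWithin_of_tendsto_nhds_of_eventually_within _
      ((Complex.continuous_conj.tendsto z).mono_left nhdsWithin_le_nhds) ?_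
    exact eventually_mem_nhdsWithin.mono fun z' hz' h' =>
      hz' ((starRingEnd ℂ).injective h')
  have key : Tendsto (slope (sharp f) z) (𝓝[≠] z)
      (𝓝 ((starRingEnd ℂ) (deriv f ((starRingEnd ℂ) z)))) := by
    have := ((Complex.continuous_conj.tendsto _).comp h).comp hconj
    convert this using 1
    funext x
    simp only [Function.comp_apply, slope_def_field, sharp]
    rw [← map_sub, ← map_sub, map_div₀, map_sub]
    simp
  exact (hasDerivAt_iff_tendsto_slope.mpr key).differentiableAt

lemma line_mem {y : ℝ} (hy : 0 < y) (x : ℝ) :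
    ((x : ℂ) + y * Complex.I) ∈ {z : ℂ | 0 < z.im} := by
  simp [Complex.add_im, hy]

lemma line_continuous {f : ℂ → ℂ} (hf : DifferentiableOn ℂ f {z : ℂ | 0 < z.im})
    {y : ℝ} (hy : 0 < y) : Continuous (fun x : ℝ => f ((x : ℂ) + y * Complex.I)) :=
  (hf.continuousOn).comp_continuous (by continuity) (line_mem hy)

lemma hardy_smul {f : ℂ → ℂ} (c : ℂ) (hf : HardyH2 f) : HardyH2 (fun z => c * f z) := by
  obtain ⟨hd, C, hC, hB⟩ := hf
  refine ⟨DifferentiableOn.const_mul hd c, (‖c‖₊ : ℝ≥0∞) * C,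
    ENNReal.mul_ne_top ENNReal.coe_ne_top hC, fun y hy => ?_⟩
  have h : (fun x : ℝ => c * f ((x : ℂ) + y * Complex.I))
      = c • (fun x : ℝ => f ((x : ℂ) + y * Complex.I)) := rfl
  rw [h, eLpNorm_const_smul]
  exact mul_le_mul_right (hB y hy) _

lemma hardy_add {f g : ℂ → ℂ} (hf : HardyH2 f) (hg : HardyH2 g) :
    HardyH2 (fun z => f z + g z) := by
  obtain ⟨hd, C, hC, hB⟩ := hf
  obtain ⟨hd', C', hC', hB'⟩ := hg
  refine ⟨hd.add hd', C + C', ENNReal.add_ne_top.mpr ⟨hC, hC'⟩, fun y hy => ?_⟩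
  calc eLpNorm ((fun x : ℝ => f ((x : ℂ) + y * Complex.I))
        + (fun x : ℝ => g ((x : ℂ) + y * Complex.I))) 2 volume
      ≤ eLpNorm (fun x : ℝ => f ((x : ℂ) + y * Complex.I)) 2 volume
        + eLpNorm (fun x : ℝ => g ((x : ℂ) + y * Complex.I)) 2 volume :=
        eLpNorm_add_le (line_continuous hd hy).aestronglyMeasurable
          (line_continuous hd' hy).aestronglyMeasurable one_le_two
    _ ≤ C + C' := add_le_add (hB y hy) (hB' y hy)

lemma memDB_smul {e f : ℂ → ℂ} (c : ℂ) (hf : MemDB e f) : MemDB e (fun z => c * f z) := by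
  obtain ⟨hd, h1, h2⟩ := hf
  refine ⟨hd.const_mul c, ?_, ?_⟩
  · have heq : (fun z => (c * f z) / e z) = fun z => c * (f z / e z) :=
      funext fun z => mul_div_assoc _ _ _
    rw [heq]
    exact hardy_smul c h1
  · have heq : (fun z => sharp (fun z => c * f z) z / e z)
        = fun z => (starRingEnd ℂ) c * (sharp f z / e z) := by
      funext z
      simp [sharp, mul_div_assoc]
    rw [heq]
    exact hardy_smul _ h2

lemma memDB_add {e f g : ℂ → ℂ} (hf : MemDB e f) (hg : MemDB e g) :
    MemDB e (fun z => f z + g z) := by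
  obtain ⟨hd, h1, h2⟩ := hf
  obtain ⟨hd', h1', h2'⟩ := hg
  refine ⟨hd.add hd', ?_, ?_⟩
  · have heq : (fun z => (f z + g z) / e z) = fun z => f z / e z + g z / e z :=
      funext fun z => add_div _ _ _
    rw [heq]
    exact hardy_add h1 h1'
  · have heq : (fun z => sharp (fun z => f z + g z) z / e z)
        = fun z => sharp f z / e z + sharp g z / e z := by
      funext z
      simp [sharp, add_div]
    rw [heq]
    exact hardy_add h2 h2'

lemma hb_ne_zero {e : ℂ → ℂ} (he : HermiteBiehler e) :
    ∀ z : ℂ, 0 ≤ z.im → e z ≠ 0 := by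
  intro z hz
  rcases eq_or_lt_of_le hz with h0 | h0
  · have hzr : z = (z.re : ℂ) := by
      apply Complex.ext <;> simp [← h0]
    rw [hzr]
    exact he.2.1 z.re
  · intro hc
    have h := he.2.2 z h0
    rw [hc, norm_zero] at h
    exact (norm_nonneg _).not_gt h

lemma hardy_dslope {e h : ℂ → ℂ} {w : ℂ} (hee : Differentiable ℂ e)
    (hene : ∀ z : ℂ, 0 ≤ z.im → e z ≠ 0) (hh : Differentiable ℂ h) (hw : h w = 0)
    (H : HardyH2 (fun z => h z / e z)) :
    HardyH2 (fun z => dslope h w z / e z) := by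
  obtain ⟨-, C₀, hC₀, hB⟩ := H
  have hF : Differentiable ℂ (dslope h w) := differentiable_dslope hh
  set q : ℂ → ℂ := fun z => dslope h w z / e z with hq
  have hqc : ContinuousOn q {z : ℂ | 0 ≤ z.im} :=
    (hF.continuous.continuousOn).div (hee.continuous.continuousOn) (fun z hz => hene z hz)
  set a : ℝ := w.re with ha
  set b : ℝ := |w.im| with hb
  have hK : IsCompact (Metric.closedBall (a : ℂ) (b + 2) ∩ {z : ℂ | 0 ≤ z.im}) :=
    (isCompact_closedBall _ _).inter_right (isClosed_le continuous_const Complex.continuous_im)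
  obtain ⟨M, hM⟩ := hK.exists_bound_of_continuousOn (hqc.mono Set.inter_subset_right)
  have hpt : ∀ z : ℂ, 1 ≤ ‖z - w‖ → ‖q z‖ ≤ ‖h z / e z‖ := by
    intro z hz1
    have hzw : z ≠ w := by
      intro h'
      rw [h'] at hz1
      simp at hz1
      linarith
    have hqz : q z = (h z / e z) * (z - w)⁻¹ := by
      rw [hq]
      simp only
      rw [dslope_of_ne _ hzw, slope_def_field, hw, sub_zero, div_right_comm, div_eq_mul_inv]
    rw [hqz, norm_mul, norm_inv]
    have h1 : ‖(z - w)‖⁻¹ ≤ 1 := by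
      exact inv_le_one_of_one_le₀ hz1
    calc ‖h z / e z‖ * ‖z - w‖⁻¹ ≤ ‖h z / e z‖ * 1 :=
          mul_le_mul_of_nonneg_left h1 (norm_nonneg _)
      _ = _ := mul_one _
  refine ⟨(hF.differentiableOn).div (hee.differentiableOn) (fun z hz => hene z (le_of_lt hz)),
    C₀ + ENNReal.ofReal (2 * max M 0),
    ENNReal.add_ne_top.mpr ⟨hC₀, ENNReal.ofReal_ne_top⟩, fun y hy => ?_⟩
  have hLc : Continuous (fun x : ℝ => q ((x : ℂ) + y * Complex.I)) :=
    hqc.comp_continuous (by continuity) (fun x => by simp [le_of_lt hy])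
  by_cases hyb : y ≤ b + 1
  · set L := fun x : ℝ => q ((x : ℂ) + y * Complex.I) with hL
    set s : Set ℝ := Set.Icc (a - 1) (a + 1) with hs
    have hsplit : L = s.indicator L + sᶜ.indicator L := (s.indicator_self_add_compl L).symm
    have hmeas1 : AEStronglyMeasurable (s.indicator L) volume :=
      hLc.aestronglyMeasurable.indicator measurableSet_Icc
    have hmeas2 : AEStronglyMeasurable (sᶜ.indicator L) volume :=
      hLc.aestronglyMeasurable.indicator measurableSet_Icc.compl
    calc eLpNorm L 2 volume
        = eLpNorm (s.indicator L + sᶜ.indicator L) 2 volume := by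
          conv_lhs => rw [hsplit]
      _ ≤ eLpNorm (s.indicator L) 2 volume + eLpNorm (sᶜ.indicator L) 2 volume :=
          eLpNorm_add_le hmeas1 hmeas2 one_le_two
      _ ≤ ENNReal.ofReal (2 * max M 0) + C₀ := by
          apply add_le_add
          · have hb1 : ∀ x : ℝ, ‖s.indicator L x‖ ≤
                ‖s.indicator (fun _ => max M 0) x‖ := by
              intro x
              by_cases hx : x ∈ s
              · rw [Set.indicator_of_mem hx, Set.indicator_of_mem hx]
                have hmem : ((x : ℂ) + y * Complex.I) ∈
                    Metric.closedBall (a : ℂ) (b + 2) ∩ {z : ℂ | 0 ≤ z.im} := by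
                  obtain ⟨hx1, hx2⟩ := hx
                  constructor
                  · rw [Metric.mem_closedBall, Complex.dist_eq]
                    refine le_trans (Complex.norm_le_abs_re_add_abs_im _) ?_
                    have hre : ((x : ℂ) + y * Complex.I - a).re = x - a := by simp
                    have him : ((x : ℂ) + y * Complex.I - a).im = y := by simp
                    rw [hre, him, _root_.abs_of_pos hy]
                    have : |x - a| ≤ 1 := abs_le.mpr ⟨by linarith, by linarith⟩
                    linarith
                  · simp [le_of_lt hy]
                have := hM _ hmem
                rw [Real.norm_eq_abs, _root_.abs_of_nonneg (le_max_right M 0)]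
                exact le_trans this (le_max_left _ _)
              · simp [Set.indicator_of_notMem hx]
            refine le_trans (eLpNorm_mono hb1) ?_
            rw [eLpNorm_indicator_const measurableSet_Icc (by norm_num) (by norm_num)]
            have hvol : volume s ^ (1 / (2 : ℝ≥0∞).toReal) ≤ 2 := by
              rw [hs, Real.volume_Icc, show a + 1 - (a - 1) = 2 by ring]
              have h2 : ENNReal.ofReal (2 : ℝ) = (2 : ℝ≥0∞) := by norm_num
              rw [h2]
              calc (2 : ℝ≥0∞) ^ (1 / (2 : ℝ≥0∞).toReal) ≤ (2 : ℝ≥0∞) ^ (1 : ℝ) := by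
                    apply ENNReal.rpow_le_rpow_of_exponent_le (by norm_num)
                    rw [ENNReal.toReal_ofNat]
                    norm_num
                _ = 2 := ENNReal.rpow_one 2
            calc (‖max M 0‖₊ : ℝ≥0∞) * volume s ^ (1 / (2 : ℝ≥0∞).toReal)
                ≤ (‖max M 0‖₊ : ℝ≥0∞) * 2 := mul_le_mul_right hvol _
              _ = ENNReal.ofReal (2 * max M 0) := by
                  rw [← enorm_eq_nnnorm, ← ofReal_norm, Real.norm_eq_abs,
                    _root_.abs_of_nonneg (le_max_right M 0),
                    ENNReal.ofReal_mul (by norm_num : (0:ℝ) ≤ 2),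
                    mul_comm (ENNReal.ofReal 2)]
                  norm_num
          · have hb2 : ∀ x : ℝ, ‖sᶜ.indicator L x‖ ≤
                ‖h ((x : ℂ) + y * Complex.I) / e ((x : ℂ) + y * Complex.I)‖ := by
              intro x
              by_cases hx : x ∈ sᶜ
              · rw [Set.indicator_of_mem hx]
                apply hpt
                have hre : ((x : ℂ) + y * Complex.I - w).re = x - a := by simp [ha]
                have hx' : ¬(a - 1 ≤ x ∧ x ≤ a + 1) := by
                  simpa [hs, Set.mem_Icc] using hx
                have h1 : 1 ≤ |x - a| := by
                  rcases not_and_or.mp hx' with h' | h'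
                  · rw [not_le] at h'
                    rw [abs_sub_comm, _root_.abs_of_pos (by linarith)]; linarith
                  · rw [not_le] at h'
                    rw [_root_.abs_of_pos (by linarith)]; linarith
                calc (1 : ℝ) ≤ |((x : ℂ) + y * Complex.I - w).re| := by rw [hre]; exact h1
                  _ ≤ ‖_‖ := Complex.abs_re_le_norm _
              · rw [Set.indicator_of_notMem hx, norm_zero]
                exact norm_nonneg _
            exact le_trans (eLpNorm_mono hb2) (hB y hy)
      _ = C₀ + ENNReal.ofReal (2 * max M 0) := add_comm _ _
  · push_neg at hyb
    have hmono : ∀ x : ℝ, ‖q ((x : ℂ) + y * Complex.I)‖ ≤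
        ‖h ((x : ℂ) + y * Complex.I) / e ((x : ℂ) + y * Complex.I)‖ := by
      intro x
      apply hpt
      have him : ((x : ℂ) + y * Complex.I - w).im = y - w.im := by simp
      have h1 : 1 ≤ |y - w.im| := by
        have : w.im ≤ b := le_abs_self _
        rw [_root_.abs_of_pos (by linarith)]
        linarith
      calc (1 : ℝ) ≤ |((x : ℂ) + y * Complex.I - w).im| := by rw [him]; exact h1
        _ ≤ ‖_‖ := Complex.abs_im_le_norm _
    exact le_trans (eLpNorm_mono hmono) (le_trans (hB y hy) le_self_add)

/-- Core step: if `G ∈ ℬ(e)` vanishes at `w`, then `dslope G w ∈ ℬ(e)` and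
`z ↦ z ⬝ dslope G w z ∈ ℬ(e)`. -/
lemma memDB_dslope {e G : ℂ → ℂ} {w : ℂ} (he : HermiteBiehler e) (hGmem : MemDB e G)
    (hGw : G w = 0) : MemDB e (dslope G w) ∧ MemDB e (fun z => z * dslope G w z) := by
  have hene := hb_ne_zero he
  have hGd : Differentiable ℂ G := hGmem.1
  have hsGw : sharp G ((starRingEnd ℂ) w) = 0 := by simp [sharp, hGw]
  have hFmem : MemDB e (dslope G w) := by
    refine ⟨differentiable_dslope hGd, hardy_dslope he.1 hene hGd hGw hGmem.2.1, ?_⟩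
    have hsharpF : sharp (dslope G w) = dslope (sharp G) ((starRingEnd ℂ) w) := by
      refine Continuous.ext_on (dense_compl_singleton ((starRingEnd ℂ) w))
        (sharp_differentiable (differentiable_dslope hGd)).continuous
        (differentiable_dslope (sharp_differentiable hGd)).continuous ?_
      intro z hz
      have hz' : z ≠ (starRingEnd ℂ) w := hz
      have hzw : (starRingEnd ℂ) z ≠ w := by
        intro h'
        apply hz'
        rw [← h']
        simp
      simp only [sharp, dslope_of_ne _ hz', dslope_of_ne _ hzw, slope_def_field, hGw, hsGw,
        sub_zero, map_div₀, map_sub, map_zero, Complex.conj_conj]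
    rw [hsharpF]
    exact hardy_dslope he.1 hene (sharp_differentiable hGd) hsGw hGmem.2.2
  refine ⟨hFmem, ?_⟩
  have heq : (fun z => z * dslope G w z) = fun z => G z + w * dslope G w z := by
    funext z
    by_cases hz : z = w
    · rw [hz, hGw, zero_add]
    · rw [dslope_of_ne _ hz, slope_def_field, hGw, sub_zero]
      field_simp [sub_ne_zero.mpr hz]
      ring
  rw [heq]
  exact memDB_add hGmem (memDB_smul w hFmem)

/-- For `f ∈ ℬ(e)` and `w ∈ ℂ`, the entire extension of
`z ↦ (s₀(w) f(z) - s₀(z) f(w))/(z - w)` belongs to `dom S`. -/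
theorem difference_quotient_mem_domS (e : ℂ → ℂ) (he : HermiteBiehler e)
    (hs0 : MemDB e (sFun e 0)) (f : ℂ → ℂ) (hf : MemDB e f) (w : ℂ) :
    ∃ F : ℂ → ℂ, Differentiable ℂ F ∧
      (∀ z : ℂ, z ≠ w → F z = (sFun e 0 w * f z - sFun e 0 z * f w) / (z - w)) ∧
      MemDB e F ∧ MemDB e (fun z => z * F z) := by
  have hGmem : MemDB e (fun z => sFun e 0 w * f z - sFun e 0 z * f w) := by
    have h1 := memDB_smul (sFun e 0 w) hf
    have h2 := memDB_smul (-(f w)) hs0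
    have h3 := memDB_add h1 h2
    have heq : (fun z => sFun e 0 w * f z + (-(f w)) * sFun e 0 z)
        = fun z => sFun e 0 w * f z - sFun e 0 z * f w := by
      funext z
      ring
    rwa [heq] at h3
  have hGw : (fun z => sFun e 0 w * f z - sFun e 0 z * f w) w = 0 := by
    simp only
    ring
  obtain ⟨hF1, hF2⟩ := memDB_dslope he hGmem hGw
  refine ⟨dslope (fun z => sFun e 0 w * f z - sFun e 0 z * f w) w,
    differentiable_dslope hGmem.1, fun z hz => ?_, hF1, hF2⟩
  rw [dslope_of_ne _ hz, slope_def_field]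
  ring
end
end

section
/- Let e be a Hermite–Biehler function (in particular, e has no real zeros) and let β ∈ [0,π). Then every zero of s_β is real and simple: if s_β(z₀) = 0 for some z₀ ∈ ℂ, then z₀ ∈ ℝ and s'_β(z₀) ≠ 0. -/
open Complex MeasureTheory Filter Topology
open scoped ENNReal Classical

noncomputable section

/-- `sharp` preserves differentiability, with conjugated derivative. -/
lemma sharp_hasDerivAt {f : ℂ → ℂ} {a z : ℂ} (hf : HasDerivAt f a ((starRingEnd ℂ) z)) :
    HasDerivAt (sharp f) ((starRingEnd ℂ) a) z := by
  rw [hasDerivAt_iff_tendsto] at hf ⊢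
  have hc : Tendsto (fun w : ℂ => (starRingEnd ℂ) w) (𝓝 z) (𝓝 ((starRingEnd ℂ) z)) :=
    (Complex.continuous_conj.tendsto z)
  have H := hf.comp hc
  convert H using 2 with w
  simp only [Function.comp, sharp, smul_eq_mul]
  have e1 : ‖(starRingEnd ℂ) w - (starRingEnd ℂ) z‖ = ‖w - z‖ := by
    rw [← map_sub]; exact Complex.norm_conj _
  have e2 : (starRingEnd ℂ) (f ((starRingEnd ℂ) w)) - (starRingEnd ℂ) (f ((starRingEnd ℂ) z)) -
      (w - z) * (starRingEnd ℂ) a = (starRingEnd ℂ)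
      (f ((starRingEnd ℂ) w) - f ((starRingEnd ℂ) z) -
        ((starRingEnd ℂ) w - (starRingEnd ℂ) z) * a) := by
    simp only [map_sub, map_mul, Complex.conj_conj]
  rw [e2, Complex.norm_conj, e1]

/-- Algebraic form of the vanishing of `s_β`-type expressions. -/
lemma sZero_iff {c u v : ℂ} (hc0 : c ≠ 0) :
    (Complex.I / 2) * (c * u - c⁻¹ * v) = 0 ↔ v = c ^ 2 * u := by
  constructor
  · intro h
    have h2 : c * u - c⁻¹ * v = 0 := by
      rcases mul_eq_zero.mp h with h' | h'
      · exact absurd h' (by simp)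
      · exact h'
    have h3 := sub_eq_zero.mp h2
    have h4 : c * (c * u) = c * (c⁻¹ * v) := by rw [h3]
    rw [← mul_assoc, ← mul_assoc, mul_inv_cancel₀ hc0, one_mul] at h4
    rw [sq]; exact h4.symm
  · intro h
    rw [h]
    field_simp
    ring

/-- Every zero of `s_β` is real and simple. -/
theorem zeros_real_simple (e : ℂ → ℂ) (he : HermiteBiehler e)
    (β : ℝ) (hβ : β ∈ Set.Ico 0 Real.pi) :
    ∀ z₀ : ℂ, sFun e β z₀ = 0 → z₀.im = 0 ∧ deriv (sFun e β) z₀ ≠ 0 := by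
  obtain ⟨hde, hnz, hub⟩ := he
  set c := Complex.exp (Complex.I * β) with hc
  have hc0 : c ≠ 0 := Complex.exp_ne_zero _
  have hcabs : ‖c‖ = 1 := by
    rw [hc, Complex.norm_exp]
    norm_num [Complex.mul_re]
  have hsform : ∀ z : ℂ, sFun e β z =
      (Complex.I / 2) * (c * e z - c⁻¹ * sharp e z) := by
    intro z; rw [sFun, Complex.exp_neg, hc]
  have habs_sharp : ∀ z : ℂ, ‖sharp e z‖ = ‖e ((starRingEnd ℂ) z)‖ :=
    fun z => Complex.norm_conj _
  have hane : ∀ z : ℂ, 0 ≤ z.im → e z ≠ 0 := by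
    intro z hz h0
    rcases lt_or_eq_of_le hz with hlt | heq
    · have h2 := hub z hlt
      rw [h0] at h2
      exact absurd h2 (by simpa using (norm_nonneg (e ((starRingEnd ℂ) z))).not_gt)
    · have hzr : z = ((z.re : ℝ) : ℂ) := by
        apply Complex.ext <;> simp [← heq]
      exact hnz z.re (by rw [← hzr]; exact h0)
  have hle : ∀ z : ℂ, 0 ≤ z.im → ‖sharp e z‖ ≤ ‖e z‖ := by
    intro z hz
    rcases lt_or_eq_of_le hz with hlt | heq
    · rw [habs_sharp]; exact (hub z hlt).le
    · have hzc : (starRingEnd ℂ) z = z := Complex.conj_eq_iff_im.mpr heq.symm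
      rw [habs_sharp, hzc]
  intro z₀ hz₀
  have heq0 : sharp e z₀ = c ^ 2 * e z₀ := by
    rw [hsform] at hz₀
    exact (sZero_iff hc0).mp hz₀
  have habs0 : ‖e ((starRingEnd ℂ) z₀)‖ = ‖e z₀‖ := by
    rw [← habs_sharp, heq0, norm_mul, norm_pow, hcabs, one_pow, one_mul]
  have him : z₀.im = 0 := by
    rcases lt_trichotomy z₀.im 0 with hlt | h | hgt
    · exfalso
      have h2 := hub ((starRingEnd ℂ) z₀) (by simpa using hlt)
      rw [Complex.conj_conj, habs0] at h2
      exact lt_irrefl _ h2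
    · exact h
    · exfalso
      have h2 := hub z₀ hgt
      rw [habs0] at h2
      exact lt_irrefl _ h2
  refine ⟨him, ?_⟩
  intro hd
  have hzc : (starRingEnd ℂ) z₀ = z₀ := Complex.conj_eq_iff_im.mpr him
  have hez : e z₀ ≠ 0 := hane z₀ (le_of_eq him.symm)
  set a := deriv e z₀ with ha
  have hea : HasDerivAt e a z₀ := (hde z₀).hasDerivAt
  have hsharpd : ∀ z : ℂ, HasDerivAt (sharp e)
      ((starRingEnd ℂ) (deriv e ((starRingEnd ℂ) z))) z :=
    fun z => sharp_hasDerivAt ((hde _).hasDerivAt)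
  have hsa : HasDerivAt (sharp e) ((starRingEnd ℂ) a) z₀ := by
    have h2 := hsharpd z₀; rwa [hzc] at h2
  have hs' : HasDerivAt (sFun e β)
      ((Complex.I / 2) * (c * a - c⁻¹ * (starRingEnd ℂ) a)) z₀ := by
    have h2 := ((hea.const_mul c).sub (hsa.const_mul c⁻¹)).const_mul (Complex.I / 2)
    apply h2.congr_of_eventuallyEq
    filter_upwards with z
    rw [hsform]; rfl
  have hval : (Complex.I / 2) * (c * a - c⁻¹ * (starRingEnd ℂ) a) = 0 := by
    rw [← hs'.deriv]; exact hd
  have hkey2 : (starRingEnd ℂ) a = c ^ 2 * a := (sZero_iff hc0).mp hval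
  -- the auxiliary function h = 1 - sharp e / (c² e)
  set q : ℂ → ℂ := fun z => sharp e z / (c ^ 2 * e z) with hqdef
  set h : ℂ → ℂ := fun z => 1 - q z with hhdef
  have hcne : c ^ 2 * e z₀ ≠ 0 := mul_ne_zero (pow_ne_zero _ hc0) hez
  have hdiffsharp : Differentiable ℂ (sharp e) := fun z => (hsharpd z).differentiableAt
  have hAq : AnalyticAt ℂ q z₀ :=
    (hdiffsharp.analyticAt z₀).div (analyticAt_const.mul (hde.analyticAt z₀)) hcne
  have hA : AnalyticAt ℂ h z₀ := analyticAt_const.sub hAq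
  have hh0 : h z₀ = 0 := by
    simp only [hhdef, hqdef, heq0, div_self hcne, sub_self]
  have hq' : HasDerivAt q
      (((starRingEnd ℂ) a * (c ^ 2 * e z₀) - sharp e z₀ * (c ^ 2 * a)) / (c ^ 2 * e z₀) ^ 2)
      z₀ := hsa.div (hea.const_mul _) hcne
  have hnum : (starRingEnd ℂ) a * (c ^ 2 * e z₀) - sharp e z₀ * (c ^ 2 * a) = 0 := by
    rw [heq0, hkey2]; ring
  have hq0 : HasDerivAt q 0 z₀ := by
    have h2 := hq'; rw [hnum, zero_div] at h2; exact h2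
  have hh' : HasDerivAt h 0 z₀ := by
    have h2 := (hasDerivAt_const z₀ (1 : ℂ)).sub hq0; rw [sub_zero] at h2; exact h2
  -- h is not eventually zero
  have hnev : ¬ ∀ᶠ z in 𝓝 z₀, h z = 0 := by
    intro hev
    rw [Metric.eventually_nhds_iff] at hev
    obtain ⟨ε, hε, hball⟩ := hev
    set w := z₀ + ((ε / 2 : ℝ) : ℂ) * Complex.I with hw
    have hwim : 0 < w.im := by
      rw [hw]
      simp [him]
      positivity
    have hdist : dist w z₀ < ε := by
      rw [Complex.dist_eq]
      have h2 : w - z₀ = ((ε / 2 : ℝ) : ℂ) * Complex.I := by rw [hw]; ring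
      rw [h2, norm_mul, Complex.norm_I, Complex.norm_real, Real.norm_eq_abs, mul_one, abs_of_pos (by linarith)]
      linarith
    have hwzero := hball hdist
    have hewne : e w ≠ 0 := hane w hwim.le
    have hcw : c ^ 2 * e w ≠ 0 := mul_ne_zero (pow_ne_zero _ hc0) hewne
    have hq1 : sharp e w = c ^ 2 * e w := by
      have h2 : q w = 1 := by
        have h3 : (1 : ℂ) - q w = 0 := hwzero
        have h4 := sub_eq_zero.mp h3
        exact h4.symm
      rw [hqdef] at h2
      exact (div_eq_one_iff_eq hcw).mp h2
    have habsw := hub w hwim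
    rw [← habs_sharp, hq1, norm_mul, norm_pow, hcabs, one_pow, one_mul] at habsw
    exact lt_irrefl _ habsw
  -- the order of vanishing
  have hord : analyticOrderAt h z₀ ≠ ⊤ := fun ht => hnev (analyticOrderAt_eq_top.mp ht)
  obtain ⟨n, hn⟩ := WithTop.ne_top_iff_exists.mp hord
  obtain ⟨g, hg, hg0, hfac⟩ := (hA.analyticOrderAt_eq_natCast (n := n)).mp hn.symm
  have hn0 : n ≠ 0 := by
    intro h0
    have h2 := hfac.self_of_nhds
    rw [hh0, h0] at h2
    simp at h2
    exact hg0 h2.symm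
  have hn1 : n ≠ 1 := by
    intro h1
    have hDg : HasDerivAt (fun z : ℂ => (z - z₀) ^ n • g z) (g z₀) z₀ := by
      rw [h1]
      have h2 := ((hasDerivAt_id z₀).sub_const z₀).mul (hg.differentiableAt.hasDerivAt)
      simp at h2 ⊢; exact h2
    have hEq : h =ᶠ[𝓝 z₀] fun z => (z - z₀) ^ n • g z := hfac
    have h3 : deriv h z₀ = g z₀ := by rw [hEq.deriv_eq]; exact hDg.deriv
    rw [hh'.deriv] at h3
    exact hg0 h3.symm
  have hn2 : 2 ≤ n := by omega
  -- choice of direction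
  set a0 := g z₀ with ha0def
  have ha0 : a0 ≠ 0 := hg0
  have habs_pos : 0 < ‖a0‖ := norm_pos_iff.mpr ha0
  set θ : ℝ := (Real.pi - Complex.arg a0) / n with hθdef
  have hnpos : (0 : ℝ) < n := by
    have : 0 < n := by omega
    exact_mod_cast this
  have hθ0 : 0 ≤ θ := div_nonneg (by linarith [Complex.arg_le_pi a0]) hnpos.le
  have hθπ : θ ≤ Real.pi := by
    rw [hθdef, div_le_iff₀ hnpos]
    have h2 := Complex.neg_pi_lt_arg a0
    have h3 : (2 : ℝ) ≤ n := by exact_mod_cast hn2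
    nlinarith [Real.pi_pos]
  have hsin : 0 ≤ Real.sin θ := Real.sin_nonneg_of_nonneg_of_le_pi hθ0 hθπ
  have hkey : Complex.exp ((((n : ℝ) * θ : ℝ) : ℂ) * Complex.I) * a0
      = -((‖a0‖ : ℝ) : ℂ) := by
    have h1 : ((n : ℝ) * θ) = Real.pi - Complex.arg a0 := by
      rw [hθdef]; field_simp
    rw [h1, Complex.ofReal_sub, sub_mul, Complex.exp_sub, Complex.exp_pi_mul_I]
    rw [div_mul_eq_mul_div, neg_one_mul, div_eq_iff (Complex.exp_ne_zero _)]
    rw [neg_mul, Complex.norm_mul_exp_arg_mul_I]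
  set u : ℂ := Complex.exp (((θ : ℝ) : ℂ) * Complex.I) with hu
  have hcont : Continuous fun r : ℝ => z₀ + (r : ℂ) * u := by continuity
  have hzfun : Tendsto (fun r : ℝ => z₀ + (r : ℂ) * u) (𝓝 0) (𝓝 z₀) := by
    have h2 := hcont.tendsto 0
    simpa using h2
  have hgc : ContinuousAt g z₀ := hg.continuousAt
  have hF : Tendsto (fun r : ℝ =>
      (Complex.exp ((((n : ℝ) * θ : ℝ) : ℂ) * Complex.I) * g (z₀ + (r : ℂ) * u)).re) (𝓝 0)
      (𝓝 (-(‖a0‖))) := by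
    have h2 : Tendsto (fun r : ℝ => g (z₀ + (r : ℂ) * u)) (𝓝 0) (𝓝 a0) :=
      hgc.tendsto.comp hzfun
    have h4 := (tendsto_const_nhds (x := Complex.exp ((((n : ℝ) * θ : ℝ) : ℂ) * Complex.I))
      (f := 𝓝 (0:ℝ))).mul h2
    rw [hkey] at h4
    have h5 := (Complex.continuous_re.tendsto _).comp h4
    simp only [Complex.neg_re, Complex.ofReal_re] at h5; exact h5
  have hneg : ∀ᶠ r : ℝ in 𝓝 0,
      (Complex.exp ((((n : ℝ) * θ : ℝ) : ℂ) * Complex.I) * g (z₀ + (r : ℂ) * u)).re < 0 :=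
    hF.eventually (Iio_mem_nhds (by linarith))
  have hfac' : ∀ᶠ r : ℝ in 𝓝 0,
      h (z₀ + (r : ℂ) * u) = ((z₀ + (r : ℂ) * u) - z₀) ^ n • g (z₀ + (r : ℂ) * u) :=
    hzfun.eventually hfac
  have hcomb := (hneg.and hfac').filter_mono
    (nhdsWithin_le_nhds : 𝓝[>] (0 : ℝ) ≤ 𝓝 0)
  obtain ⟨r, ⟨hrneg, hrfac⟩, hrpos⟩ := (hcomb.and self_mem_nhdsWithin).exists
  set w := z₀ + (r : ℂ) * u with hwdef
  have hwim : 0 ≤ w.im := by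
    rw [hwdef]
    have h2 : ((r : ℂ) * u).im = r * Real.sin θ := by
      rw [hu]
      simp [Complex.exp_ofReal_mul_I_im]
    simp only [Complex.add_im, him, h2, zero_add]
    exact mul_nonneg hrpos.le hsin
  have hpos : 0 ≤ (h w).re := by
    have hewne := hane w hwim
    have habsq : ‖q w‖ ≤ 1 := by
      rw [hqdef]
      simp only []
      rw [norm_div, norm_mul, norm_pow, hcabs, one_pow, one_mul]
      rw [div_le_one (norm_pos_iff.mpr hewne)]
      exact hle w hwim
    have h2 : (q w).re ≤ 1 := le_trans (Complex.re_le_norm _) habsq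
    have h3 : (h w).re = 1 - (q w).re := by
      rw [hhdef]; simp [Complex.sub_re]
    linarith
  have hneg' : (h w).re < 0 := by
    have harg : ((n : ℂ)) * (((θ : ℝ) : ℂ) * Complex.I)
        = (((n : ℝ) * θ : ℝ) : ℂ) * Complex.I := by push_cast; ring
    have h4 : ((z₀ + (r : ℂ) * u) - z₀) ^ n
        = ((r ^ n : ℝ) : ℂ) * Complex.exp ((((n : ℝ) * θ : ℝ) : ℂ) * Complex.I) := by
      have h5 : (z₀ + (r : ℂ) * u) - z₀ = (r : ℂ) * u := by ring
      rw [h5, mul_pow, hu, ← Complex.exp_nat_mul, harg, Complex.ofReal_pow]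
    have h6 : (h w).re = r ^ n *
        (Complex.exp ((((n : ℝ) * θ : ℝ) : ℂ) * Complex.I) * g w).re := by
      rw [hwdef, hrfac, smul_eq_mul, h4, mul_assoc, Complex.re_ofReal_mul]
    rw [h6]
    exact mul_neg_of_pos_of_neg (pow_pos hrpos n) hrneg
  linarith
end
end
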